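/- For any functions a, a', b, b' taking values in {−1, +1} and any probability measure μ on a hidden-variable space Λ, the CHSH quantity |E(a,b) + E(a,b') + E(a',b) − E(a',b')| ≤ 2, where E(x,y) = ∫_Λ x(λ)y(λ) dμ(λ). -/

import Mathlib

noncomputable section
open scoped ComplexConjugate

abbrev Q1 := EuclideanSpace ℂ (Fin 2)
abbrev Qb2 := EuclideanSpace ℂ (Fin 2 × Fin 2)
abbrev Qb3 := EuclideanSpace ℂ (Fin 2 × Fin 2 × Fin 2)
abbrev Qb4 := EuclideanSpace ℂ (Fin 2 × Fin 2 × Fin 2 × Fin 2)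

/-- computational basis vector of one qubit -/
def ket (i : Fin 2) : Q1 := WithLp.toLp 2 <| fun j => if j = i then 1 else 0
def ket2 (i j : Fin 2) : Qb2 := WithLp.toLp 2 <| fun p => (if p.1 = i then 1 else 0) * (if p.2 = j then 1 else 0)
def ket3 (i j k : Fin 2) : Qb3 := WithLp.toLp 2 <| fun p =>
  (if p.1 = i then 1 else 0) * (if p.2.1 = j then 1 else 0) * (if p.2.2 = k then 1 else 0)
def ket4 (i j k l : Fin 2) : Qb4 := WithLp.toLp 2 <| fun p =>
  (if p.1 = i then 1 else 0) * (if p.2.1 = j then 1 else 0) *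
  (if p.2.2.1 = k then 1 else 0) * (if p.2.2.2 = l then 1 else 0)

/-- tensor product of two single-qubit vectors -/
def tp (u v : Q1) : Qb2 := WithLp.toLp 2 <| fun p => u p.1 * v p.2
/-- tensor product of two two-qubit vectors: u on factors (1,2), v on factors (3,4) -/
def tp22 (u v : Qb2) : Qb4 := WithLp.toLp 2 <| fun p => u (p.1, p.2.1) * v (p.2.2.1, p.2.2.2)

def sqrt2 : ℂ := (Real.sqrt 2 : ℝ)

def psiM : Qb2 := sqrt2⁻¹ • (ket2 0 1 - ket2 1 0)
def psiP : Qb2 := sqrt2⁻¹ • (ket2 0 1 + ket2 1 0)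
def phiM : Qb2 := sqrt2⁻¹ • (ket2 0 0 - ket2 1 1)
def phiP : Qb2 := sqrt2⁻¹ • (ket2 0 0 + ket2 1 1)

/-- |Ψ⁻⟩₁₂ ⊗ |Ψ⁻⟩₃₄ -/
def bigPsi : Qb4 := tp22 psiM psiM

/-- reorder a vector given in factor order (1,4,2,3) into factor order (1,2,3,4) -/
def reord (v : Qb4) : Qb4 := WithLp.toLp 2 <| fun p => v (p.1, p.2.2.2, p.2.1, p.2.2.1)

def outer2 (v : Qb2) : Matrix (Fin 2 × Fin 2) (Fin 2 × Fin 2) ℂ := fun p q => v p * conj (v q)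
def outer4 (v : Qb4) :
    Matrix (Fin 2 × Fin 2 × Fin 2 × Fin 2) (Fin 2 × Fin 2 × Fin 2 × Fin 2) ℂ :=
  fun p q => v p * conj (v q)

/-- partial trace over tensor factors 2 and 3 -/
def ptrace23 (M : Matrix (Fin 2 × Fin 2 × Fin 2 × Fin 2) (Fin 2 × Fin 2 × Fin 2 × Fin 2) ℂ) :
    Matrix (Fin 2 × Fin 2) (Fin 2 × Fin 2) ℂ :=
  fun x y => ∑ b : Fin 2, ∑ c : Fin 2, M (x.1, b, c, x.2) (y.1, b, c, y.2)

/-- partial trace over the second factor -/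
def ptrace2 (M : Matrix (Fin 2 × Fin 2) (Fin 2 × Fin 2) ℂ) : Matrix (Fin 2) (Fin 2) ℂ :=
  fun a a' => ∑ b : Fin 2, M (a, b) (a', b)

/-- Kronecker product of 2×2 matrices -/
def kron (A B : Matrix (Fin 2) (Fin 2) ℂ) :
    Matrix (Fin 2 × Fin 2) (Fin 2 × Fin 2) ℂ :=
  fun p q => A p.1 q.1 * B p.2 q.2

/-- apply a matrix to a vector -/
def applyM {I : Type} [Fintype I] (M : Matrix I I ℂ) (v : EuclideanSpace ℂ I) :
    EuclideanSpace ℂ I := WithLp.toLp 2 <| fun p => ∑ q, M p q * v q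

/-- the operator I₁ ⊗ |β⟩⟨β|^{(2,3)} ⊗ I₄ applied to a four-qubit vector -/
def projOn23 (β : Qb2) (v : Qb4) : Qb4 := WithLp.toLp 2 <| fun p =>
  β (p.2.1, p.2.2.1) * ∑ b : Fin 2, ∑ c : Fin 2, conj (β (b, c)) * v (p.1, b, c, p.2.2.2)

/-- lift an operator on factors (2,3) to the four-qubit space -/
def lift23 (P : Matrix (Fin 2 × Fin 2) (Fin 2 × Fin 2) ℂ) :
    Matrix (Fin 2 × Fin 2 × Fin 2 × Fin 2) (Fin 2 × Fin 2 × Fin 2 × Fin 2) ℂ :=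
  fun p q => (if p.1 = q.1 then 1 else 0) * (if p.2.2.2 = q.2.2.2 then 1 else 0) *
    P (p.2.1, p.2.2.1) (q.2.1, q.2.2.1)

def σx : Matrix (Fin 2) (Fin 2) ℂ := !![0, 1; 1, 0]
def σy : Matrix (Fin 2) (Fin 2) ℂ := !![0, -Complex.I; Complex.I, 0]
def σz : Matrix (Fin 2) (Fin 2) ℂ := !![1, 0; 0, -1]

open MeasureTheory in
theorem chsh_hidden_variable {Λ : Type} [MeasurableSpace Λ]
    (μ : Measure Λ) [IsProbabilityMeasure μ]
    (a a' b b' : Λ → ℝ)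
    (hma : Measurable a) (hma' : Measurable a') (hmb : Measurable b) (hmb' : Measurable b')
    (ha : ∀ l, a l = -1 ∨ a l = 1) (ha' : ∀ l, a' l = -1 ∨ a' l = 1)
    (hb : ∀ l, b l = -1 ∨ b l = 1) (hb' : ∀ l, b' l = -1 ∨ b' l = 1) :
    |(∫ l, a l * b l ∂μ) + (∫ l, a l * b' l ∂μ) + (∫ l, a' l * b l ∂μ)
      - (∫ l, a' l * b' l ∂μ)| ≤ 2 := by
  have bdd : ∀ f : Λ → ℝ, (∀ l, f l = -1 ∨ f l = 1) → ∀ l, |f l| ≤ 1 := by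
    intro f hf l; rcases hf l with h | h <;> simp [h]
  have integ : ∀ (f g : Λ → ℝ), Measurable f → Measurable g →
      (∀ l, f l = -1 ∨ f l = 1) → (∀ l, g l = -1 ∨ g l = 1) →
      Integrable (fun l => f l * g l) μ := by
    intro f g hf hg hfb hgb
    apply Integrable.mono' (g := fun _ => (1:ℝ)) (integrable_const 1)
      ((hf.mul hg).aestronglyMeasurable)
    filter_upwards with l
    calc |f l * g l| = |f l| * |g l| := abs_mul _ _
      _ ≤ 1 * 1 := mul_le_mul (bdd f hfb l) (bdd g hgb l) (abs_nonneg _) zero_le_one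
      _ = 1 := one_mul 1
  have i1 := integ a b hma hmb ha hb
  have i2 := integ a b' hma hmb' ha hb'
  have i3 := integ a' b hma' hmb ha' hb
  have i4 := integ a' b' hma' hmb' ha' hb'
  have key : (∫ l, a l * b l ∂μ) + (∫ l, a l * b' l ∂μ) + (∫ l, a' l * b l ∂μ)
      - (∫ l, a' l * b' l ∂μ)
      = ∫ l, (a l * b l + a l * b' l + a' l * b l - a' l * b' l) ∂μ := by
    have e1 : (∫ l, (a l * b l + a l * b' l) ∂μ)
        = (∫ l, a l * b l ∂μ) + (∫ l, a l * b' l ∂μ) := integral_add i1 i2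
    have e2 : (∫ l, (a l * b l + a l * b' l + a' l * b l) ∂μ)
        = (∫ l, (a l * b l + a l * b' l) ∂μ) + (∫ l, a' l * b l ∂μ) :=
      integral_add (i1.add i2) i3
    have e3 : (∫ l, (a l * b l + a l * b' l + a' l * b l - a' l * b' l) ∂μ)
        = (∫ l, (a l * b l + a l * b' l + a' l * b l) ∂μ) - (∫ l, a' l * b' l ∂μ) :=
      integral_sub ((i1.add i2).add i3) i4
    rw [e3, e2, e1]
  rw [key]
  have hbound : ∀ l, |a l * b l + a l * b' l + a' l * b l - a' l * b' l| ≤ 2 := by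
    intro l
    rcases ha l with h1 | h1 <;> rcases ha' l with h2 | h2 <;>
      rcases hb l with h3 | h3 <;> rcases hb' l with h4 | h4 <;>
      simp [h1, h2, h3, h4] <;> norm_num
  calc |∫ l, (a l * b l + a l * b' l + a' l * b l - a' l * b' l) ∂μ|
      ≤ ∫ l, |a l * b l + a l * b' l + a' l * b l - a' l * b' l| ∂μ :=
        by
        simpa using norm_integral_le_integral_norm
          (fun l => a l * b l + a l * b' l + a' l * b l - a' l * b' l) (μ := μ)
    _ ≤ ∫ _, (2:ℝ) ∂μ := by
        apply integral_mono_of_nonneg (Filter.Eventually.of_forall fun l => abs_nonneg _)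
          (integrable_const 2)
        filter_upwards with l using hbound l
    _ = 2 := by simp
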